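/- Fix M ≥ 2, K ≥ 1, T > 0, β_j > 0, and energies 0 < E_p^j < E_j for all j. For 0 < τ < T, set p_p^j = E_p^j/τ and p_u^j = (E_j − E_p^j)/(T − τ). Then for every user k, the spectral efficiency R_k(τ) = (1 − τ/T) log₂(1 + SINR_k) is a strictly decreasing function of τ on (0, T). -/

import Mathlib

set_option maxHeartbeats 1000000


/-- The uplink SINR of user `k` under MRC with pilot powers `pp` and data powers `pu`. -/
noncomputable def SINR (M K : ℕ) (τ : ℝ) (β pp pu : Fin K → ℝ) (k : Fin K) : ℝ :=
  ((M : ℝ) - 1) * pu k * pp k * (β k) ^ 2 * τ /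
    (1 + ∑ j, β j * pu j + τ * β k * pp k +
      τ * pp k * β k * ∑ j ∈ Finset.univ.erase k, β j * pu j)

/-- The achievable spectral efficiency `R_k = (1 - τ/T) log₂(1 + SINR_k)` of user `k`. -/
noncomputable def SE (M K : ℕ) (τ T : ℝ) (β pp pu : Fin K → ℝ) (k : Fin K) : ℝ :=
  (1 - τ / T) * Real.logb 2 (1 + SINR M K τ β pp pu k)

/-- With per-user pilot energy `E_p^j = τ p_p^j` and data energy
`E_j − E_p^j = (T−τ) p_u^j` held fixed, each user's spectral efficiency
`R_k(τ)` is a strictly decreasing function of the pilot length `τ` on `(0, T)`. -/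
theorem stmt_7 (M K : ℕ) (hM : 2 ≤ M) (hK : 1 ≤ K) (T : ℝ) (hT : 0 < T)
    (β E Ep : Fin K → ℝ) (hβ : ∀ j, 0 < β j)
    (hEp : ∀ j, 0 < Ep j) (hEpE : ∀ j, Ep j < E j) (k : Fin K) :
    StrictAntiOn (fun τ : ℝ =>
      SE M K τ T β (fun j => Ep j / τ) (fun j => (E j - Ep j) / (T - τ)) k)
      (Set.Ioo 0 T) := by
  have hβk : 0 < β k := hβ k
  have hEpk : 0 < Ep k := hEp k
  have hDk : 0 < E k - Ep k := sub_pos.2 (hEpE k)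
  set S : ℝ := ∑ j, β j * (E j - Ep j) with hS_def
  set S' : ℝ := ∑ j ∈ Finset.univ.erase k, β j * (E j - Ep j) with hS'_def
  have hS : 0 < S :=
    Finset.sum_pos (fun j _ => mul_pos (hβ j) (sub_pos.2 (hEpE j))) ⟨k, Finset.mem_univ k⟩
  have hS' : 0 ≤ S' :=
    Finset.sum_nonneg fun j _ => le_of_lt (mul_pos (hβ j) (sub_pos.2 (hEpE j)))
  have hM1 : (1 : ℝ) ≤ (M : ℝ) - 1 := by
    have : (2 : ℝ) ≤ (M : ℝ) := by exact_mod_cast hM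
    linarith
  set A : ℝ := ((M : ℝ) - 1) * (β k) ^ 2 * Ep k * (E k - Ep k) with hA_def
  have hA : 0 < A := by
    have : (0:ℝ) < (M : ℝ) - 1 := by linarith
    positivity
  set c : ℝ := 1 + β k * Ep k with hc_def
  have hc : 0 < c := by positivity
  set d : ℝ := S + β k * Ep k * S' with hd_def
  have hd : 0 < d := by positivity
  -- the closed form
  clear_value S S'
  set g : ℝ → ℝ :=
    fun τ => (1 - τ / T) * (Real.log (1 + A * (c * (T - τ) + d)⁻¹) / Real.log 2) with hg_def
  clear_value A c d g
  have hEq : ∀ τ ∈ Set.Ioo (0:ℝ) T,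
      SE M K τ T β (fun j => Ep j / τ) (fun j => (E j - Ep j) / (T - τ)) k = g τ := by
    intro τ hτ
    obtain ⟨hτ0, hτT⟩ := hτ
    have hs : 0 < T - τ := sub_pos.2 hτT
    have hu : 0 < c * (T - τ) + d := by nlinarith
    have hsum1 : (∑ j, β j * ((E j - Ep j) / (T - τ))) = S / (T - τ) := by
      rw [hS_def, Finset.sum_div]
      exact Finset.sum_congr rfl fun j _ => (mul_div_assoc _ _ _).symm
    have hsum2 : (∑ j ∈ Finset.univ.erase k, β j * ((E j - Ep j) / (T - τ))) = S' / (T - τ) := by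
      rw [hS'_def, Finset.sum_div]
      exact Finset.sum_congr rfl fun j _ => (mul_div_assoc _ _ _).symm
    have hSINR : SINR M K τ β (fun j => Ep j / τ) (fun j => (E j - Ep j) / (T - τ)) k
        = A * (c * (T - τ) + d)⁻¹ := by
      rw [SINR, hsum1, hsum2, ← div_eq_mul_inv]
      have hden : 0 < 1 + S / (T - τ) + τ * β k * (Ep k / τ)
          + τ * (Ep k / τ) * β k * (S' / (T - τ)) := by
        have t1 : 0 < S / (T - τ) := div_pos hS hs
        have t2 : 0 < τ * β k * (Ep k / τ) := by positivity
        have t3 : 0 ≤ τ * (Ep k / τ) * β k * (S' / (T - τ)) :=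
          mul_nonneg (by positivity) (div_nonneg hS' hs.le)
        linarith
      rw [div_eq_div_iff (ne_of_gt hden) (ne_of_gt hu), hA_def, hc_def, hd_def]
      field_simp
      ring
    rw [SE, hSINR]
    simp only [hg_def, ← Real.log_div_log]
  have hAnti : StrictAntiOn g (Set.Ioo 0 T) := by
    have hlog2 : 0 < Real.log 2 := Real.log_pos (by norm_num)
    have hder : ∀ τ ∈ Set.Ioo (0:ℝ) T, HasDerivAt g
        (-(1 / T) * (Real.log (1 + A * (c * (T - τ) + d)⁻¹) / Real.log 2)
          + (1 - τ / T) *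
            ((A * (c / (c * (T - τ) + d) ^ 2) / (1 + A * (c * (T - τ) + d)⁻¹)) / Real.log 2)) τ := by
      intro τ hτ
      obtain ⟨hτ0, hτT⟩ := hτ
      have hs : 0 < T - τ := sub_pos.2 hτT
      have hu : 0 < c * (T - τ) + d := by nlinarith
      have hv : 0 < 1 + A * (c * (T - τ) + d)⁻¹ := by
        have := mul_pos hA (inv_pos.2 hu)
        linarith
      have h1 : HasDerivAt (fun τ : ℝ => c * (T - τ) + d) (-c) τ := by
        simpa using (((hasDerivAt_id τ).const_sub T).const_mul c).add_const d
      have h2 : HasDerivAt (fun τ : ℝ => (c * (T - τ) + d)⁻¹)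
          (c / (c * (T - τ) + d) ^ 2) τ := by
        simpa [Pi.inv_def] using h1.inv (ne_of_gt hu)
      have h3 : HasDerivAt (fun τ : ℝ => 1 + A * (c * (T - τ) + d)⁻¹)
          (A * (c / (c * (T - τ) + d) ^ 2)) τ := (h2.const_mul A).const_add 1
      have h4 := (h3.log (ne_of_gt hv)).div_const (Real.log 2)
      have h5 : HasDerivAt (fun τ : ℝ => 1 - τ / T) (-(1 / T)) τ := by
        simpa using ((hasDerivAt_id τ).div_const T).const_sub 1
      simpa [hg_def, Pi.mul_def] using h5.mul h4
    apply strictAntiOn_of_deriv_neg (convex_Ioo 0 T)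
    · exact fun x hx => ((hder x hx).continuousAt).continuousWithinAt
    · intro τ hτ
      rw [interior_Ioo] at hτ
      rw [(hder τ hτ).deriv]
      obtain ⟨hτ0, hτT⟩ := hτ
      have hs : 0 < T - τ := sub_pos.2 hτT
      set u : ℝ := c * (T - τ) + d with hu_def
      clear_value u
      have hu : 0 < u := by rw [hu_def]; nlinarith
      set v : ℝ := 1 + A * u⁻¹ with hv_def
      clear_value v
      have hxpos : 0 < A * u⁻¹ := mul_pos hA (inv_pos.2 hu)
      have hv1 : 1 < v := by rw [hv_def]; linarith
      have hv : 0 < v := by linarith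
      -- key inequality : A/(u+A) < log v
      have key : A / (u + A) < Real.log v := by
        have hvinv : Real.log v⁻¹ < v⁻¹ - 1 :=
          Real.log_lt_sub_one_of_pos (inv_pos.2 hv) (ne_of_lt (inv_lt_one_of_one_lt₀ hv1))
        rw [Real.log_inv] at hvinv
        have heq : A / (u + A) = 1 - v⁻¹ := by
          rw [hv_def]
          have huA : (0:ℝ) < u + A := by linarith
          field_simp
          ring
        rw [heq]; linarith
      -- second step: (T-τ)*c*A/(u*(u+A)) < A/(u+A)
      have huA : (0:ℝ) < u + A := by linarith
      have h7 : (T - τ) * c * A < u * A := by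
        have : (T - τ) * c < u := by rw [hu_def]; nlinarith
        exact mul_lt_mul_of_pos_right this hA
      have h8 : (T - τ) * c * A / (u * (u + A)) < A / (u + A) := by
        rw [div_lt_div_iff₀ (mul_pos hu huA) huA]
        nlinarith [mul_lt_mul_of_pos_right h7 huA]
      have hmain : (T - τ) * (A * (c / u ^ 2) / v) < Real.log v := by
        have hrew : (T - τ) * (A * (c / u ^ 2) / v) = (T - τ) * c * A / (u * (u + A)) := by
          rw [hv_def]
          field_simp
        rw [hrew]
        exact lt_trans h8 key
      have hfin : -(1 / T) * (Real.log v / Real.log 2)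
          + (1 - τ / T) * ((A * (c / u ^ 2) / v) / Real.log 2)
          = ((T - τ) * (A * (c / u ^ 2) / v) - Real.log v) / (T * Real.log 2) := by
        field_simp
        ring
      rw [hfin]
      exact div_neg_of_neg_of_pos (by linarith) (mul_pos hT hlog2)
  intro a ha b hb hab
  have h := hAnti ha hb hab
  simpa only [hEq a ha, hEq b hb] using h
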